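/- For every positive integer m and every positive real number c, f(m,c)^m = f(1,c). -/

import Mathlib

set_option maxHeartbeats 1000000

open Finset

noncomputable def Aab (a : ℝ) : ℕ → ℝ
  | 0 => 1
  | (k+1) => a * (a + ((k:ℝ)+1))^k

lemma FD : ∀ j : ℕ, ∀ m : ℕ, j < m → ∀ x : ℝ,
    ∑ k ∈ range (m+1), (-1:ℝ)^(m-k) * (m.choose k) * (x + k)^j = 0 := by
  intro j
  induction j using Nat.strong_induction_on with
  | _ j ih =>
    intro m hjm x
    obtain ⟨m', rfl⟩ : ∃ m', m = m' + 1 := ⟨m - 1, by omega⟩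
    set t : ℕ → ℝ := fun k => (-1:ℝ)^(m'+1-k) * (((m'+1).choose k : ℕ) : ℝ) * (x + (k:ℝ))^j with ht
    set u : ℕ → ℝ := fun k => (-1:ℝ)^(m'+1-k) * ((m'.choose k : ℕ) : ℝ) * (x + (k:ℝ))^j with hu
    set g : ℕ → ℝ := fun k => (-1:ℝ)^(m'-k) * ((m'.choose k : ℕ) : ℝ) * (x + (k:ℝ))^j with hg
    have hstep : ∑ k ∈ range (m'+1+1), t k
        = ∑ k ∈ range (m'+1), (-1:ℝ)^(m'-k) * (m'.choose k) * ((x+1+k)^j - (x+k)^j) := by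
      rw [Finset.sum_range_succ' t (m'+1)]
      have e1 : ∀ k ∈ range (m'+1),
          t (k+1) = (-1:ℝ)^(m'-k) * (m'.choose k) * (x+1+k)^j + u (k+1) := by
        intro k hk
        rw [ht, hu]
        simp only
        rw [Nat.choose_succ_succ]
        have h2 : m' + 1 - (k+1) = m' - k := by omega
        rw [h2]
        push_cast
        ring
      rw [Finset.sum_congr rfl e1, Finset.sum_add_distrib]
      have h0 : t 0 = u 0 := by rw [ht, hu]; norm_num
      have e2 : ∑ k ∈ range (m'+1), u (k+1) + u 0 = ∑ k ∈ range (m'+1+1), u k :=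
        (Finset.sum_range_succ' u (m'+1)).symm
      have e3 : ∑ k ∈ range (m'+1+1), u k = -∑ k ∈ range (m'+1), g k := by
        rw [Finset.sum_range_succ]
        have hlast : u (m'+1) = 0 := by
          rw [hu]; simp [Nat.choose_succ_self]
        rw [hlast, add_zero]
        have e5 : ∀ k ∈ range (m'+1), u k = -(g k) := by
          intro k hk
          simp only [mem_range] at hk
          rw [hu, hg]
          simp only
          have h2 : m' + 1 - k = (m' - k) + 1 := by omega
          rw [h2]
          ring
        rw [Finset.sum_congr rfl e5, Finset.sum_neg_distrib]
      rw [h0, add_assoc, e2, e3, ← Finset.sum_neg_distrib, ← Finset.sum_add_distrib]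
      refine Finset.sum_congr rfl fun k hk => ?_
      rw [hg]; ring
    rw [hstep]
    have e4 : ∀ k ∈ range (m'+1), (-1:ℝ)^(m'-k) * (m'.choose k) * ((x+1+k)^j - (x+k)^j)
        = ∑ i ∈ range j, (j.choose i : ℝ) * ((-1:ℝ)^(m'-k) * (m'.choose k) * (x+k)^i) := by
      intro k hk
      have hb : (x+1+k)^j = ∑ i ∈ range (j+1), (x+k)^i * (1:ℝ)^(j-i) * (j.choose i) := by
        rw [← add_pow]
        ring_nf
      rw [hb, Finset.sum_range_succ]
      simp only [one_pow, mul_one, Nat.choose_self, Nat.cast_one]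
      rw [add_sub_cancel_right, Finset.mul_sum]
      exact Finset.sum_congr rfl fun i _ => by ring
    rw [Finset.sum_congr rfl e4, Finset.sum_comm]
    refine Finset.sum_eq_zero fun i hi => ?_
    simp only [mem_range] at hi
    rw [← Finset.mul_sum]
    have := ih i hi m' (by omega) x
    rw [this, mul_zero]



lemma abel_identity : ∀ n : ℕ, ∀ x y : ℝ,
    ∑ k ∈ range (n+1), ((n.choose k : ℕ) : ℝ) * Aab x k * (y + ((n-k : ℕ) : ℝ))^(n-k)
      = (x + y + n)^n := by
  intro n
  induction n with
  | zero => intro x y; simp [Aab]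
  | succ n ihn =>
    intro x y
    set f : ℝ → ℝ := fun z =>
      ∑ k ∈ range (n+2), (((n+1).choose k : ℕ) : ℝ) * Aab x k * (z + ((n+1-k : ℕ) : ℝ))^(n+1-k)
      with hf
    set g : ℝ → ℝ := fun z => (x + z + ((n:ℝ)+1))^(n+1) with hg
    have hd : ∀ z : ℝ, HasDerivAt (fun w => f w - g w) 0 z := by
      intro z
      have hfd : HasDerivAt f (((n:ℝ)+1) * (x + z + ((n:ℝ)+1))^n) z := by
        have term : ∀ k ∈ range (n+2), HasDerivAt
            (fun w => (((n+1).choose k : ℕ) : ℝ) * Aab x k * (w + ((n+1-k : ℕ) : ℝ))^(n+1-k))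
            ((((n+1).choose k : ℕ) : ℝ) * Aab x k *
              ((n+1-k : ℕ) * (z + ((n+1-k : ℕ) : ℝ))^(n+1-k-1))) z := by
          intro k hk
          have h1 : HasDerivAt (fun w : ℝ => w + ((n+1-k : ℕ) : ℝ)) 1 z :=
            (hasDerivAt_id z).add_const _
          have h2 := (h1.pow (n+1-k))
          simpa using h2.const_mul ((((n+1).choose k : ℕ) : ℝ) * Aab x k)
        have hsum := HasDerivAt.fun_sum term
        have key : ∑ k ∈ range (n+2), (((n+1).choose k : ℕ) : ℝ) * Aab x k *
              ((n+1-k : ℕ) * (z + ((n+1-k : ℕ) : ℝ))^(n+1-k-1))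
            = ((n:ℝ)+1) * (x + z + ((n:ℝ)+1))^n := by
          rw [Finset.sum_range_succ]
          simp only [Nat.sub_self, Nat.cast_zero, zero_mul, mul_zero, add_zero]
          have e1 : ∀ k ∈ range (n+1),
              (((n+1).choose k : ℕ) : ℝ) * Aab x k *
                ((n+1-k : ℕ) * (z + ((n+1-k : ℕ) : ℝ))^(n+1-k-1))
              = ((n:ℝ)+1) * (((n.choose k : ℕ) : ℝ) * Aab x k *
                  ((z+1) + ((n-k : ℕ) : ℝ))^(n-k)) := by
            intro k hk
            simp only [mem_range] at hk
            have hk' : k ≤ n := by omega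
            have hc : ((n+1-k : ℕ) : ℝ) * (((n+1).choose k : ℕ) : ℝ)
                = ((n:ℝ)+1) * ((n.choose k : ℕ) : ℝ) := by
              have : (n+1-k) * ((n+1).choose k) = (n+1) * (n.choose k) := by
                rw [mul_comm, mul_comm (n+1) (n.choose k)]
                exact (Nat.choose_mul_succ_eq n k).symm
              calc ((n+1-k : ℕ) : ℝ) * (((n+1).choose k : ℕ) : ℝ)
                  = (((n+1-k) * ((n+1).choose k) : ℕ) : ℝ) := by push_cast; ring
                _ = (((n+1) * (n.choose k) : ℕ) : ℝ) := by rw [this]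
                _ = ((n:ℝ)+1) * ((n.choose k : ℕ) : ℝ) := by push_cast; ring
            have he : n+1-k-1 = n-k := by omega
            have hz : z + ((n+1-k : ℕ) : ℝ) = (z+1) + ((n-k : ℕ) : ℝ) := by
              have : (n+1-k : ℕ) = (n-k) + 1 := by omega
              rw [this]; push_cast; ring
            rw [he, hz]
            calc (((n+1).choose k : ℕ) : ℝ) * Aab x k *
                  (((n+1-k : ℕ) : ℝ) * ((z+1) + ((n-k : ℕ) : ℝ))^(n-k))
                = (((n+1-k : ℕ) : ℝ) * (((n+1).choose k : ℕ) : ℝ)) *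
                    (Aab x k * ((z+1) + ((n-k : ℕ) : ℝ))^(n-k)) := by ring
              _ = _ := by rw [hc]; ring
          rw [Finset.sum_congr rfl e1, ← Finset.mul_sum, ihn x (z+1)]
          ring_nf
        rw [← key]
        exact hsum
      have hgd : HasDerivAt g (((n:ℝ)+1) * (x + z + ((n:ℝ)+1))^n) z := by
        have h1 : HasDerivAt (fun w : ℝ => x + w + ((n:ℝ)+1)) 1 z := by
          simpa using ((hasDerivAt_id z).const_add x).add_const ((n:ℝ)+1)
        have h2 := h1.fun_pow (n+1)
        simpa [mul_comm] using h2
      simpa using hfd.fun_sub hgd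
    have hconst : ∀ z w : ℝ, f z - g z = f w - g w :=
      is_const_of_deriv_eq_zero (fun u => (hd u).differentiableAt)
        (fun u => (hd u).deriv)
    have hpoint : f (-x - ((n:ℝ)+1)) - g (-x - ((n:ℝ)+1)) = 0 := by
      have hgz : g (-x - ((n:ℝ)+1)) = 0 := by
        rw [hg]; simp only
        rw [show x + (-x - ((n:ℝ)+1)) + ((n:ℝ)+1) = 0 by ring]
        simp
      have hfz : f (-x - ((n:ℝ)+1)) = 0 := by
        rw [hf]; simp only
        have e6 : ∀ k ∈ range (n+2),
            (((n+1).choose k : ℕ) : ℝ) * Aab x k *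
              ((-x - ((n:ℝ)+1)) + ((n+1-k : ℕ) : ℝ))^(n+1-k)
            = x * ((-1:ℝ)^(n+1-k) * (((n+1).choose k : ℕ) : ℝ) * (x + (k:ℝ))^n) := by
          intro k hk
          simp only [mem_range] at hk
          have hkle : k ≤ n + 1 := by omega
          have hcast : ((n+1-k : ℕ) : ℝ) = ((n:ℝ)+1) - (k:ℝ) := by
            push_cast [Nat.cast_sub hkle]; ring
          have hbase : (-x - ((n:ℝ)+1)) + ((n+1-k : ℕ) : ℝ) = -(x + (k:ℝ)) := by
            rw [hcast]; ring
          rw [hbase, neg_pow]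
          cases k with
          | zero =>
            simp only [Aab, Nat.sub_zero, Nat.cast_zero, add_zero, mul_one]
            ring
          | succ j =>
            simp only [Aab, Nat.succ_sub_succ]
            push_cast
            have hpow : (x + ((j:ℝ)+1))^j * (x + ((j:ℝ)+1))^(n-j) = (x + ((j:ℝ)+1))^n := by
              rw [← pow_add]; congr 1; omega
            linear_combination ((((n + 1).choose (j + 1) : ℕ) : ℝ) * x * (-1:ℝ)^(n-j)) * hpow
        rw [Finset.sum_congr rfl e6, ← Finset.mul_sum]
        have hfd0 := FD n (n+1) (by omega) x
        rw [hfd0, mul_zero]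
      rw [hfz, hgz, sub_zero]
    have : f y - g y = 0 := by rw [hconst y (-x - ((n:ℝ)+1))]; exact hpoint
    have hfg : f y = g y := by linarith [this]
    calc ∑ k ∈ range (n+1+1), (((n+1).choose k : ℕ) : ℝ) * Aab x k *
          (y + ((n+1-k : ℕ) : ℝ))^(n+1-k) = f y := by rw [hf]
      _ = g y := hfg
      _ = (x + y + ((n:ℕ)+1 : ℕ))^(n+1) := by rw [hg]; push_cast; ring_nf


lemma hurwitz (n : ℕ) (x y : ℝ) :
    ∑ k ∈ range (n+1), ((n.choose k : ℕ) : ℝ) * Aab x k * Aab y (n-k) = Aab (x+y) n := by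
  cases n with
  | zero => simp [Aab]
  | succ n =>
    have hA : ∀ (w : ℝ) (m : ℕ), Aab w m = (w + (m:ℝ))^m - (m:ℝ) * (w + (m:ℝ))^(m-1) := by
      intro w m
      cases m with
      | zero => simp [Aab]
      | succ j =>
        simp only [Aab, Nat.succ_sub_one]
        push_cast
        ring
    have key : ∑ k ∈ range (n+2), (((n+1).choose k : ℕ) : ℝ) * Aab x k *
          (((n+1-k : ℕ) : ℝ) * (y + ((n+1-k : ℕ) : ℝ))^(n+1-k-1))
        = ((n:ℝ)+1) * (x + y + ((n:ℝ)+1))^n := by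
      rw [Finset.sum_range_succ]
      simp only [Nat.sub_self, Nat.cast_zero, zero_mul, mul_zero, add_zero]
      have e1 : ∀ k ∈ range (n+1),
          (((n+1).choose k : ℕ) : ℝ) * Aab x k *
            (((n+1-k : ℕ) : ℝ) * (y + ((n+1-k : ℕ) : ℝ))^(n+1-k-1))
          = ((n:ℝ)+1) * (((n.choose k : ℕ) : ℝ) * Aab x k *
              ((y+1) + ((n-k : ℕ) : ℝ))^(n-k)) := by
        intro k hk
        simp only [mem_range] at hk
        have hk' : k ≤ n := by omega
        have hc : ((n+1-k : ℕ) : ℝ) * (((n+1).choose k : ℕ) : ℝ)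
            = ((n:ℝ)+1) * ((n.choose k : ℕ) : ℝ) := by
          have h5 : (n+1-k) * ((n+1).choose k) = (n+1) * (n.choose k) := by
            rw [mul_comm, mul_comm (n+1) (n.choose k)]
            exact (Nat.choose_mul_succ_eq n k).symm
          calc ((n+1-k : ℕ) : ℝ) * (((n+1).choose k : ℕ) : ℝ)
              = (((n+1-k) * ((n+1).choose k) : ℕ) : ℝ) := by push_cast; ring
            _ = (((n+1) * (n.choose k) : ℕ) : ℝ) := by rw [h5]
            _ = ((n:ℝ)+1) * ((n.choose k : ℕ) : ℝ) := by push_cast; ring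
        have he : n+1-k-1 = n-k := by omega
        have hz : y + ((n+1-k : ℕ) : ℝ) = (y+1) + ((n-k : ℕ) : ℝ) := by
          have h6 : (n+1-k : ℕ) = (n-k) + 1 := by omega
          rw [h6]; push_cast; ring
        rw [he, hz]
        calc (((n+1).choose k : ℕ) : ℝ) * Aab x k *
              (((n+1-k : ℕ) : ℝ) * ((y+1) + ((n-k : ℕ) : ℝ))^(n-k))
            = (((n+1-k : ℕ) : ℝ) * (((n+1).choose k : ℕ) : ℝ)) *
                (Aab x k * ((y+1) + ((n-k : ℕ) : ℝ))^(n-k)) := by ring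
          _ = _ := by rw [hc]; ring
      rw [Finset.sum_congr rfl e1, ← Finset.mul_sum, abel_identity n x (y+1)]
      ring_nf
    have split : ∀ k ∈ range (n+2), (((n+1).choose k : ℕ) : ℝ) * Aab x k * Aab y (n+1-k)
        = (((n+1).choose k : ℕ) : ℝ) * Aab x k * (y + ((n+1-k : ℕ) : ℝ))^(n+1-k)
          - (((n+1).choose k : ℕ) : ℝ) * Aab x k *
              (((n+1-k : ℕ) : ℝ) * (y + ((n+1-k : ℕ) : ℝ))^(n+1-k-1)) := by
      intro k hk
      rw [hA y (n+1-k)]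
      ring
    rw [Finset.sum_congr rfl split, Finset.sum_sub_distrib, abel_identity (n+1) x y, key]
    rw [hA (x+y) (n+1)]
    simp only [Nat.succ_sub_one]
    push_cast
    ring
lemma Aab_nonneg {a : ℝ} (ha : 0 ≤ a) (k : ℕ) : 0 ≤ Aab a k := by
  cases k with
  | zero => norm_num [Aab]
  | succ j =>
    have : (0:ℝ) ≤ a + ((j:ℝ)+1) := by positivity
    simp only [Aab]
    positivity

lemma summable_A {a y : ℝ} (ha : 0 < a) (hy : 0 < y) (hy1 : y ≤ Real.exp (-1)) :
    Summable (fun k : ℕ => Aab a k * y^k / (k.factorial : ℝ)) := by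
  obtain ⟨s, hs, hstir⟩ := Stirling.stirlingSeq'_bounded_by_pos_constant
  rw [← summable_nat_add_iff 1]
  have hsum : Summable (fun k : ℕ => (a * Real.exp a / (s * Real.sqrt 2)) *
      (1 / ((k+1 : ℕ) : ℝ) ^ ((3:ℝ)/2))) := by
    apply Summable.mul_left
    have base : Summable (fun n : ℕ => 1 / (n:ℝ) ^ ((3:ℝ)/2)) :=
      Real.summable_one_div_nat_rpow.mpr (by norm_num)
    exact (summable_nat_add_iff 1).mpr base
  apply Summable.of_nonneg_of_le (fun k => ?_) (fun k => ?_) hsum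
  · have h1 := Aab_nonneg ha.le (k+1)
    positivity
  · have hKpos : (0:ℝ) < ((k:ℝ)+1) := by positivity
    have hfac : s * (Real.sqrt (2*((k:ℝ)+1)) * (((k:ℝ)+1) / Real.exp 1)^(k+1)) ≤ ((k+1).factorial : ℝ) := by
      have h2 := hstir k
      rw [Stirling.stirlingSeq] at h2
      push_cast at h2
      have hden : 0 < Real.sqrt (2*((k:ℝ)+1)) * (((k:ℝ)+1) / Real.exp 1)^(k+1) := by positivity
      rw [le_div_iff₀ hden] at h2
      exact h2
    have hfacpos : (0:ℝ) < ((k+1).factorial : ℝ) := by positivity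
    have hKne : (((k:ℝ)+1)) ≠ 0 := ne_of_gt hKpos
    have hAb : Aab a (k+1) = a * (a + ((k:ℝ)+1))^k := rfl
    have hKa : ((k:ℝ)+1) * (a / ((k:ℝ)+1)) = a := by field_simp
    have h6 : a + ((k:ℝ)+1) ≤ ((k:ℝ)+1) * Real.exp (a/((k:ℝ)+1)) := by
      have h7 := mul_le_mul_of_nonneg_left (Real.add_one_le_exp (a/((k:ℝ)+1))) hKpos.le
      rw [mul_add, mul_one, hKa] at h7
      linarith
    have hexpk : (Real.exp (a/((k:ℝ)+1)))^k ≤ Real.exp a := by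
      rw [← Real.exp_nat_mul]
      apply Real.exp_le_exp.mpr
      calc (k:ℝ) * (a/((k:ℝ)+1)) ≤ ((k:ℝ)+1) * (a/((k:ℝ)+1)) :=
            mul_le_mul_of_nonneg_right (by linarith) (by positivity)
        _ = a := hKa
    have h3 : (a + ((k:ℝ)+1))^k ≤ ((k:ℝ)+1)^k * Real.exp a := by
      calc (a + ((k:ℝ)+1))^k ≤ (((k:ℝ)+1) * Real.exp (a/((k:ℝ)+1)))^k :=
            pow_le_pow_left₀ (by positivity) h6 k
        _ = ((k:ℝ)+1)^k * (Real.exp (a/((k:ℝ)+1)))^k := mul_pow _ _ k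
        _ ≤ ((k:ℝ)+1)^k * Real.exp a := mul_le_mul_of_nonneg_left hexpk (by positivity)
    have hy2 : y^(k+1) ≤ Real.exp (-1)^(k+1) := pow_le_pow_left₀ hy.le hy1 (k+1)
    have hA : Aab a (k+1) * y^(k+1) ≤ a * Real.exp a * ((k:ℝ)+1)^k * Real.exp (-1)^(k+1) := by
      rw [hAb]
      have e9 : a * Real.exp a * ((k:ℝ)+1)^k * Real.exp (-1)^(k+1)
          = a * (((k:ℝ)+1)^k * Real.exp a) * Real.exp (-1)^(k+1) := by ring
      rw [e9]
      have hm1 : a * (a + ((k:ℝ)+1))^k ≤ a * (((k:ℝ)+1)^k * Real.exp a) :=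
        mul_le_mul_of_nonneg_left h3 ha.le
      exact mul_le_mul hm1 hy2 (by positivity) (by positivity)
    have step1 : Aab a (k+1) * y^(k+1) / ((k+1).factorial : ℝ)
        ≤ (a * Real.exp a * ((k:ℝ)+1)^k * Real.exp (-1)^(k+1)) /
            (s * (Real.sqrt (2*((k:ℝ)+1)) * (((k:ℝ)+1) / Real.exp 1)^(k+1))) :=
      div_le_div₀ (by positivity) hA (by positivity) hfac
    refine step1.trans (le_of_eq ?_)
    have hs2 : Real.sqrt (2*((k:ℝ)+1)) = Real.sqrt 2 * Real.sqrt ((k:ℝ)+1) :=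
      Real.sqrt_mul (by norm_num) _
    have hrp : (((k:ℝ)+1)) ^ ((3:ℝ)/2) = ((k:ℝ)+1) * Real.sqrt ((k:ℝ)+1) := by
      rw [show (3:ℝ)/2 = 1 + 1/2 by norm_num, Real.rpow_add hKpos, Real.rpow_one,
        ← Real.sqrt_eq_rpow]
    have hKK : (((k:ℝ)+1))^(k+1) = ((k:ℝ)+1)^k * ((k:ℝ)+1) := pow_succ _ _
    push_cast
    rw [hs2, hrp, Real.exp_neg, div_pow, hKK]
    have hsqK : (0:ℝ) < Real.sqrt ((k:ℝ)+1) := Real.sqrt_pos.mpr hKpos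
    have hsq2 : (0:ℝ) < Real.sqrt 2 := by positivity
    have hexp : (0:ℝ) < Real.exp 1 := Real.exp_pos 1
    have hKk : (0:ℝ) < ((k:ℝ)+1)^k := by positivity
    field_simp
    ring_nf
    rw [inv_pow]
    field_simp

noncomputable def Fser (al y : ℝ) : ℝ := ∑' k, Aab al k * y^k / (k.factorial : ℝ)

lemma F_mul {al be y : ℝ} (hal : 0 < al) (hbe : 0 < be) (hy : 0 < y)
    (hy1 : y ≤ Real.exp (-1)) : Fser al y * Fser be y = Fser (al + be) y := by
  have hnormf : ∀ (a : ℝ), 0 < a →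
      Summable (fun k : ℕ => ‖Aab a k * y^k / (k.factorial : ℝ)‖) := by
    intro a ha
    refine (summable_A ha hy hy1).congr fun k => ?_
    rw [Real.norm_of_nonneg]
    have := Aab_nonneg ha.le k
    positivity
  rw [Fser, Fser, Fser,
    tsum_mul_tsum_eq_tsum_sum_antidiagonal_of_summable_norm (hnormf al hal) (hnormf be hbe)]
  apply tsum_congr
  intro n
  rw [Finset.Nat.sum_antidiagonal_eq_sum_range_succ_mk]
  have hfn : ((n.factorial : ℕ) : ℝ) ≠ 0 := by positivity
  have e : ∀ k ∈ range (n+1),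
      (Aab al k * y^k / (k.factorial : ℝ)) * (Aab be (n-k) * y^(n-k) / ((n-k).factorial : ℝ))
      = (((n.choose k : ℕ) : ℝ) * Aab al k * Aab be (n-k)) * (y^n / (n.factorial : ℝ)) := by
    intro k hk
    simp only [mem_range] at hk
    have hk' : k ≤ n := by omega
    have hkf : ((k.factorial : ℕ) : ℝ) ≠ 0 := by positivity
    have hnkf : (((n-k).factorial : ℕ) : ℝ) ≠ 0 := by positivity
    have hcf : ((n.choose k : ℕ) : ℝ) * (k.factorial : ℝ) * ((n-k).factorial : ℝ)
        = (n.factorial : ℝ) := by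
      exact_mod_cast congrArg (fun t : ℕ => (t : ℝ)) (Nat.choose_mul_factorial_mul_factorial hk')
    have hyk : y^k * y^(n-k) = y^n := by rw [← pow_add]; congr 1; omega
    rw [div_mul_div_comm, mul_div_assoc', div_eq_div_iff (by positivity) (by positivity)]
    calc Aab al k * y ^ k * (Aab be (n - k) * y ^ (n - k)) * ↑n.factorial
        = (Aab al k * Aab be (n-k)) * (y^k * y^(n-k)) * ↑n.factorial := by ring
      _ = (Aab al k * Aab be (n-k)) * y^n * ↑n.factorial := by rw [hyk]
      _ = ↑(n.choose k) * Aab al k * Aab be (n - k) * y ^ n * (↑k.factorial * ↑(n - k).factorial)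
          := by rw [← hcf]; ring
      _ = ↑(n.choose k) * Aab al k * Aab be (n - k) * y ^ n * (↑k.factorial * ↑(n - k).factorial)
          := rfl
  rw [Finset.sum_congr rfl e, ← Finset.sum_mul, hurwitz n al be, mul_div_assoc]

/-- `f m c = ∑_{k=0}^∞ (km+1)^{k-1} c^k e^{-c(km+1)/m} / (m^k k!)`, where the factor
`(km+1)^{k-1}` for `k = 0` is interpreted as `1` (here via `ℕ`-subtraction in the exponent,
which gives `(0·m+1)^0 = 1`). -/
noncomputable def f (m c : ℝ) : ℝ :=
  ∑' k : ℕ, ((k : ℝ) * m + 1) ^ (k - 1) * c ^ k *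
    Real.exp (-c * ((k : ℝ) * m + 1) / m) / (m ^ k * (Nat.factorial k : ℝ))

lemma f_eq (m : ℝ) (hm : 0 < m) (c : ℝ) :
    f m c = Real.exp (-c/m) * Fser (1/m) (c * Real.exp (-c)) := by
  have hm0 : m ≠ 0 := ne_of_gt hm
  rw [f, Fser, ← tsum_mul_left]
  apply tsum_congr
  intro k
  cases k with
  | zero =>
    simp only [Aab, Nat.cast_zero, zero_mul, zero_add, pow_zero, Nat.factorial_zero,
      Nat.cast_one, mul_one, one_mul]
    norm_num
  | succ j =>
    simp only [Aab, Nat.succ_sub_one]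
    have hjf : (((j+1).factorial : ℕ) : ℝ) ≠ 0 := by positivity
    have h1 : ((j:ℝ)+1)*m+1 = m * (1/m + ((j:ℝ)+1)) := by field_simp; ring
    have h3 : Real.exp (-c*(((j:ℝ)+1)*m+1)/m)
        = Real.exp (-c)^(j+1) * Real.exp (-c/m) := by
      rw [← Real.exp_nat_mul, ← Real.exp_add]
      congr 1
      field_simp
      push_cast
      ring
    have hc1 : ((j+1 : ℕ) : ℝ) = (j:ℝ)+1 := by push_cast; ring
    rw [hc1, h3, h1, mul_pow, mul_pow]
    rw [pow_succ m j]
    field_simp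

theorem f_pow_nat (m : ℕ) (hm : 0 < m) (c : ℝ) (hc : 0 < c) :
    f (m : ℝ) c ^ m = f 1 c := by
  have hmr : (0:ℝ) < (m:ℝ) := by exact_mod_cast hm
  have hy : 0 < c * Real.exp (-c) := by positivity
  have hy1 : c * Real.exp (-c) ≤ Real.exp (-1) := by
    have h1 : c ≤ Real.exp (c-1) := by
      have := Real.add_one_le_exp (c-1); linarith
    calc c * Real.exp (-c) ≤ Real.exp (c-1) * Real.exp (-c) :=
          mul_le_mul_of_nonneg_right h1 (Real.exp_pos _).le
      _ = Real.exp (-1) := by rw [← Real.exp_add]; ring_nf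
  have key : ∀ j : ℕ, Fser ((1:ℝ)/(m:ℝ)) (c * Real.exp (-c)) ^ (j+1)
      = Fser (((j:ℝ)+1)/(m:ℝ)) (c * Real.exp (-c)) := by
    intro j
    induction j with
    | zero => norm_num
    | succ j ih =>
      have hstep := F_mul (al := ((j:ℝ)+1)/(m:ℝ)) (be := (1:ℝ)/(m:ℝ))
        (by positivity) (by positivity) hy hy1
      calc Fser ((1:ℝ)/(m:ℝ)) (c * Real.exp (-c)) ^ (j+1+1)
          = Fser ((1:ℝ)/(m:ℝ)) (c * Real.exp (-c)) ^ (j+1) *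
              Fser ((1:ℝ)/(m:ℝ)) (c * Real.exp (-c)) := pow_succ _ _
        _ = Fser (((j:ℝ)+1)/(m:ℝ)) (c * Real.exp (-c)) *
              Fser ((1:ℝ)/(m:ℝ)) (c * Real.exp (-c)) := by rw [ih]
        _ = Fser (((j:ℝ)+1)/(m:ℝ) + 1/(m:ℝ)) (c * Real.exp (-c)) := hstep
        _ = Fser (((j:ℝ)+1+1)/(m:ℝ)) (c * Real.exp (-c)) := by rw [← add_div]
        _ = Fser ((((j+1:ℕ):ℝ)+1)/(m:ℝ)) (c * Real.exp (-c)) := by norm_cast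
  obtain ⟨m', rfl⟩ : ∃ m', m = m' + 1 := ⟨m-1, by omega⟩
  rw [f_eq _ hmr c, mul_pow]
  have e2 : Real.exp (-c/((m'+1 : ℕ):ℝ))^(m'+1) = Real.exp (-c) := by
    rw [← Real.exp_nat_mul]
    congr 1
    field_simp
  have e3 : Fser (1/((m'+1 : ℕ):ℝ)) (c * Real.exp (-c)) ^ (m'+1)
      = Fser 1 (c * Real.exp (-c)) := by
    rw [key m']
    congr 1
    push_cast
    field_simp
  rw [e2, e3, f_eq 1 one_pos c]
  norm_num
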